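/- Let x : [0,∞) → C be a bounded C¹ solution of x'(t) + x(t) = θ(t) f(x(t)) + (1 − θ(t)) T(x(t)) with θ(t) → 0 and ‖x'(t)‖ → 0 as t → ∞, and let q* be the unique solution of (VP). Then limsup_{t → ∞} ⟨f(q*) − q*, x(t) − q*⟩ ≤ 0. -/

import Mathlib

open Filter Topology RealInnerProductSpace

/-- Along an ultrafilter, an eventually bounded real-valued function has a limit. -/
lemma ultrafilter_limit_exists {ι : Type*} (𝒰 : Ultrafilter ι) (g : ι → ℝ) (M : ℝ)
    (hg : ∀ᶠ t in 𝒰, |g t| ≤ M) : ∃ a, Tendsto g (𝒰 : Filter ι) (𝓝 a) := by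
  have h1 : (Ultrafilter.map g 𝒰 : Filter ℝ) ≤ 𝓟 (Set.Icc (-M) M) := by
    rw [Filter.le_principal_iff]
    exact Filter.mem_map.mpr (hg.mono fun t ht => by
      simpa [Set.mem_Icc] using abs_le.mp ht)
  obtain ⟨a, -, ha⟩ := isCompact_Icc.ultrafilter_le_nhds (Ultrafilter.map g 𝒰) h1
  exact ⟨a, ha⟩

theorem stmt18 {H : Type*} [NormedAddCommGroup H] [InnerProductSpace ℝ H]
    [CompleteSpace H]
    (C : Set H) (hCne : C.Nonempty) (hCcl : IsClosed C) (hCconv : Convex ℝ C)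
    (f T : H → H) (hfC : Set.MapsTo f C C) (hTC : Set.MapsTo T C C)
    (α : ℝ) (hα0 : 0 ≤ α) (hα1 : α < 1)
    (hf : ∀ x ∈ C, ∀ y ∈ C, ‖f x - f y‖ ≤ α * ‖x - y‖)
    (hT : ∀ x ∈ C, ∀ y ∈ C, ‖T x - T y‖ ≤ ‖x - y‖)
    (hFix : {z | z ∈ C ∧ T z = z}.Nonempty)
    (θ : ℝ → ℝ) (hθc : Continuous θ) (hθ : ∀ t, 0 ≤ t → 0 < θ t ∧ θ t ≤ 1)
    (hθ0 : Tendsto θ atTop (𝓝 0))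
    (x x' : ℝ → H) (hx' : ∀ t, 0 ≤ t → HasDerivAt x (x' t) t)
    (hode : ∀ t, 0 ≤ t →
      x' t + x t = θ t • f (x t) + (1 - θ t) • T (x t))
    (hxC : ∀ t, 0 ≤ t → x t ∈ C)
    (hbdd : ∃ R : ℝ, ∀ t, 0 ≤ t → ‖x t‖ ≤ R)
    (hx'0 : Tendsto (fun t => ‖x' t‖) atTop (𝓝 0))
    (q : H) (hq : q ∈ C ∧ T q = q)
    (hVP : ∀ z, z ∈ C ∧ T z = z → ⟪f q - q, z - q⟫ ≤ 0) :
    limsup (fun t => ⟪f q - q, x t - q⟫) atTop ≤ 0 := by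
  obtain ⟨R₀, hR₀⟩ := hbdd
  set R : ℝ := max R₀ 0 with hRdef
  have hR0 : (0:ℝ) ≤ R := le_max_right _ _
  have hR : ∀ t, 0 ≤ t → ‖x t‖ ≤ R := fun t ht => (hR₀ t ht).trans (le_max_left _ _)
  set u : H := f q - q with hu
  set φ : ℝ → ℝ := fun t => ⟪u, x t - q⟫ with hφ
  set M : ℝ := ‖u‖ * (R + ‖q‖) with hM
  -- eventual bound on φ
  have hφbd : ∀ᶠ t in atTop, |φ t| ≤ M := by
    filter_upwards [eventually_ge_atTop (0:ℝ)] with t ht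
    calc |φ t| ≤ ‖u‖ * ‖x t - q‖ := abs_real_inner_le_norm _ _
      _ ≤ ‖u‖ * (R + ‖q‖) := by
          refine mul_le_mul_of_nonneg_left ?_ (norm_nonneg _)
          exact (norm_sub_le _ _).trans (add_le_add_left (hR t ht) _)
  have hbu : IsBoundedUnder (· ≤ ·) atTop φ :=
    ⟨M, hφbd.mono fun t ht => (abs_le.mp ht).2⟩
  have hbl : IsBoundedUnder (· ≥ ·) atTop φ :=
    ⟨-M, hφbd.mono fun t ht => (abs_le.mp ht).1⟩
  have hcb : IsCoboundedUnder (· ≤ ·) atTop φ := hbl.isCoboundedUnder_le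
  set L : ℝ := limsup φ atTop with hL
  -- the filter along which φ tends to L
  have hFne : (atTop ⊓ Filter.comap φ (𝓝 L)).NeBot := by
    constructor
    intro hbot
    rw [inf_eq_bot_iff] at hbot
    obtain ⟨U, hU, V, hV, hUV⟩ := hbot
    obtain ⟨W, hW, hWV⟩ := Filter.mem_comap.mp hV
    obtain ⟨ε, hε, hball⟩ := Metric.mem_nhds_iff.mp hW
    have h1 : ∀ᶠ t in atTop, φ t < L + ε :=
      eventually_lt_of_limsup_lt (by linarith [hL]) hbu
    have h2 : ∃ᶠ t in atTop, L - ε < φ t :=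
      frequently_lt_of_lt_limsup hcb (by linarith [hL])
    have hU' : ∀ᶠ t in atTop, t ∈ U := hU
    have h3 : ∃ᶠ t in atTop, t ∈ U ∧ (L - ε < φ t ∧ φ t < L + ε) :=
      (h2.and_eventually (hU'.and h1)).mono (fun t ht => ⟨ht.2.1, ht.1, ht.2.2⟩)
    obtain ⟨t, htU, ht1, ht2⟩ := h3.exists
    have : t ∈ V := hWV (hball (by
      simp only [Metric.mem_ball, Real.dist_eq]
      rw [abs_lt]; constructor <;> linarith))
    exact absurd (Set.mem_inter htU this) (by rw [hUV]; exact Set.notMem_empty t)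
  obtain ⟨𝒰, h𝒰F⟩ := @Filter.exists_ultrafilter_le _ _ hFne
  have h𝒰top : (𝒰 : Filter ℝ) ≤ atTop := h𝒰F.trans inf_le_left
  have hφL : Tendsto φ (𝒰 : Filter ℝ) (𝓝 L) :=
    Filter.tendsto_iff_comap.mpr (h𝒰F.trans inf_le_right)
  have h𝒰0 : ∀ᶠ t in (𝒰 : Filter ℝ), (0:ℝ) ≤ t :=
    (eventually_ge_atTop 0).filter_mono h𝒰top
  -- weak limit along 𝒰
  have hlim : ∀ v : H, ∃ a, Tendsto (fun t => ⟪x t, v⟫) (𝒰 : Filter ℝ) (𝓝 a) := by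
    intro v
    refine ultrafilter_limit_exists 𝒰 _ (R * ‖v‖) ?_
    filter_upwards [h𝒰0] with t ht
    calc |⟪x t, v⟫| ≤ ‖x t‖ * ‖v‖ := abs_real_inner_le_norm _ _
      _ ≤ R * ‖v‖ := mul_le_mul_of_nonneg_right (hR t ht) (norm_nonneg _)
  clear hFne h𝒰F
  choose l hl using hlim
  have lbound : ∀ v, |l v| ≤ R * ‖v‖ := by
    intro v
    refine le_of_tendsto (hl v).abs ?_
    filter_upwards [h𝒰0] with t ht
    calc |⟪x t, v⟫| ≤ ‖x t‖ * ‖v‖ := abs_real_inner_le_norm _ _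
      _ ≤ R * ‖v‖ := mul_le_mul_of_nonneg_right (hR t ht) (norm_nonneg _)
  have ladd : ∀ v w, l (v + w) = l v + l w := by
    intro v w
    refine tendsto_nhds_unique (hl (v + w)) ?_
    have := (hl v).add (hl w)
    simpa [inner_add_right] using this
  have lsmul : ∀ (c : ℝ) v, l (c • v) = c * l v := by
    intro c v
    refine tendsto_nhds_unique (hl (c • v)) ?_
    have := (hl v).const_mul c
    simpa [real_inner_smul_right] using this
  obtain ⟨z, hweak⟩ : ∃ z : H,
      ∀ v : H, Tendsto (fun t => ⟪x t, v⟫) (𝒰 : Filter ℝ) (𝓝 ⟪z, v⟫) := by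
    have Φlin : H →ₗ[ℝ] ℝ := { toFun := l, map_add' := ladd, map_smul' := lsmul }
    refine ⟨(InnerProductSpace.toDual ℝ H).symm
      (LinearMap.mkContinuous
        { toFun := l, map_add' := ladd, map_smul' := lsmul } R
        (fun v => by simpa [Real.norm_eq_abs] using lbound v)), fun v => ?_⟩
    rw [InnerProductSpace.toDual_symm_apply]
    exact hl v
  -- z ∈ C
  have hzC : z ∈ C := by
    by_contra hzC
    obtain ⟨g, s, hgs, hgz⟩ := geometric_hahn_banach_closed_point hCconv hCcl hzC
    set w : H := (InnerProductSpace.toDual ℝ H).symm g with hw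
    have hgv : ∀ v, g v = ⟪v, w⟫ := fun v => by
      rw [real_inner_comm, hw, InnerProductSpace.toDual_symm_apply]
    have h1 : Tendsto (fun t => g (x t)) (𝒰 : Filter ℝ) (𝓝 (g z)) := by
      simp only [hgv]
      exact hweak w
    have h2 : ∀ᶠ t in (𝒰 : Filter ℝ), g (x t) ≤ s := by
      filter_upwards [h𝒰0] with t ht
      exact (hgs _ (hxC t ht)).le
    exact absurd (le_of_tendsto h1 h2) (not_le.mpr hgz)
  -- asymptotic regularity: ‖x t - T (x t)‖ → 0
  set B : ℝ := α * (R + ‖q‖) + ‖f q - q‖ + (R + ‖q‖) with hB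
  have hfT : ∀ t, 0 ≤ t → ‖f (x t) - T (x t)‖ ≤ B := by
    intro t ht
    have hxq : ‖x t - q‖ ≤ R + ‖q‖ :=
      (norm_sub_le _ _).trans (add_le_add_left (hR t ht) _)
    calc ‖f (x t) - T (x t)‖
        ≤ ‖f (x t) - f q‖ + ‖f q - q‖ + ‖q - T (x t)‖ := by
          have := norm_sub_le_norm_sub_add_norm_sub (f (x t)) (f q) (T (x t))
          have h2 := norm_sub_le_norm_sub_add_norm_sub (f q) q (T (x t))
          linarith
      _ ≤ α * (R + ‖q‖) + ‖f q - q‖ + (R + ‖q‖) := by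
          have h1 : ‖f (x t) - f q‖ ≤ α * ‖x t - q‖ := hf _ (hxC t ht) _ hq.1
          have h2 : ‖q - T (x t)‖ ≤ ‖x t - q‖ := by
            have := hT q hq.1 (x t) (hxC t ht)
            rw [hq.2] at this
            calc ‖q - T (x t)‖ = ‖T q - T (x t)‖ := by rw [hq.2]
              _ ≤ ‖q - x t‖ := hT q hq.1 (x t) (hxC t ht)
              _ = ‖x t - q‖ := norm_sub_rev _ _
          have h3 : α * ‖x t - q‖ ≤ α * (R + ‖q‖) :=
            mul_le_mul_of_nonneg_left hxq hα0
          linarith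
  have hδbd : ∀ t, 0 ≤ t → ‖x t - T (x t)‖ ≤ θ t * B + ‖x' t‖ := by
    intro t ht
    have hid : x t - T (x t) = θ t • (f (x t) - T (x t)) - x' t := by
      have h := hode t ht
      have hx'eq : x' t = θ t • f (x t) + (1 - θ t) • T (x t) - x t := by
        rw [← h]; abel
      rw [hx'eq, smul_sub, sub_smul, one_smul]
      abel
    rw [hid]
    calc ‖θ t • (f (x t) - T (x t)) - x' t‖
        ≤ ‖θ t • (f (x t) - T (x t))‖ + ‖x' t‖ := norm_sub_le _ _
      _ ≤ θ t * B + ‖x' t‖ := by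
          rw [norm_smul, Real.norm_eq_abs, abs_of_pos (hθ t ht).1]
          exact add_le_add_left
            (mul_le_mul_of_nonneg_left (hfT t ht) (hθ t ht).1.le) _
  have hδ0 : Tendsto (fun t => ‖x t - T (x t)‖) atTop (𝓝 0) := by
    have hgoal : Tendsto (fun t => θ t * B + ‖x' t‖) atTop (𝓝 0) := by
      have := (hθ0.mul_const B).add hx'0
      simpa using this
    refine squeeze_zero' ?_ ?_ hgoal
    · filter_upwards [eventually_ge_atTop (0:ℝ)] with t ht
      exact norm_nonneg _
    · filter_upwards [eventually_ge_atTop (0:ℝ)] with t ht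
      exact hδbd t ht
  have hδ𝒰 : Tendsto (fun t => ‖x t - T (x t)‖) (𝒰 : Filter ℝ) (𝓝 0) :=
    hδ0.mono_left h𝒰top
  -- limit of ‖x t‖^2
  obtain ⟨b, hb⟩ : ∃ b, Tendsto (fun t => ‖x t‖ ^ 2) (𝒰 : Filter ℝ) (𝓝 b) := by
    refine ultrafilter_limit_exists 𝒰 _ (R ^ 2) ?_
    filter_upwards [h𝒰0] with t ht
    rw [abs_of_nonneg (by positivity)]
    exact pow_le_pow_left₀ (norm_nonneg _) (hR t ht) 2
  -- Opial / demiclosedness argument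
  set A : ℝ := b - 2 * ⟪z, z⟫ + ‖z‖ ^ 2 with hA
  have hA1 : Tendsto (fun t => ‖x t - z‖ ^ 2) (𝒰 : Filter ℝ) (𝓝 A) := by
    have h := (hb.sub ((hweak z).const_mul 2)).add (tendsto_const_nhds (x := ‖z‖ ^ 2))
    refine h.congr fun t => ?_
    rw [norm_sub_sq_real]
  have hA2 : Tendsto (fun t => ‖x t - T z‖ ^ 2) (𝒰 : Filter ℝ)
      (𝓝 (b - 2 * ⟪z, T z⟫ + ‖T z‖ ^ 2)) := by
    have h := (hb.sub ((hweak (T z)).const_mul 2)).add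
      (tendsto_const_nhds (x := ‖T z‖ ^ 2))
    refine h.congr fun t => ?_
    rw [norm_sub_sq_real]
  have hAnn : 0 ≤ A :=
    ge_of_tendsto hA1 (Eventually.of_forall fun t => by positivity)
  have hxz : Tendsto (fun t => ‖x t - z‖) (𝒰 : Filter ℝ) (𝓝 (Real.sqrt A)) := by
    have := (Real.continuous_sqrt.tendsto A).comp hA1
    refine this.congr fun t => ?_
    simp [Real.sqrt_sq (norm_nonneg _)]
  have hrhs : Tendsto (fun t => (‖x t - T (x t)‖ + ‖x t - z‖) ^ 2)
      (𝒰 : Filter ℝ) (𝓝 A) := by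
    have := ((hδ𝒰.add hxz).pow 2)
    rw [zero_add, Real.sq_sqrt hAnn] at this
    exact this
  have hcomp : ∀ᶠ t in (𝒰 : Filter ℝ),
      ‖x t - T z‖ ^ 2 ≤ (‖x t - T (x t)‖ + ‖x t - z‖) ^ 2 := by
    filter_upwards [h𝒰0] with t ht
    have h1 : ‖x t - T z‖ ≤ ‖x t - T (x t)‖ + ‖x t - z‖ := by
      calc ‖x t - T z‖ ≤ ‖x t - T (x t)‖ + ‖T (x t) - T z‖ :=
            norm_sub_le_norm_sub_add_norm_sub _ _ _
        _ ≤ ‖x t - T (x t)‖ + ‖x t - z‖ :=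
            add_le_add_right (hT (x t) (hxC t ht) z hzC) _
    exact pow_le_pow_left₀ (norm_nonneg _) h1 2
  have hineq : b - 2 * ⟪z, T z⟫ + ‖T z‖ ^ 2 ≤ A :=
    le_of_tendsto_of_tendsto hA2 hrhs hcomp
  have hTz : T z = z := by
    have h1 : ⟪z, z⟫ = ‖z‖ ^ 2 := real_inner_self_eq_norm_sq z
    have h2 : ‖z - T z‖ ^ 2 = ‖z‖ ^ 2 - 2 * ⟪z, T z⟫ + ‖T z‖ ^ 2 :=
      norm_sub_sq_real _ _
    have hsq : ‖z - T z‖ ^ 2 ≤ 0 := by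
      have h3 := hA
      linarith
    have hn : ‖z - T z‖ = 0 := by nlinarith [norm_nonneg (z - T z)]
    have := sub_eq_zero.mp (norm_eq_zero.mp hn)
    exact this.symm
  have hfinal : Tendsto φ (𝒰 : Filter ℝ) (𝓝 ⟪u, z - q⟫) := by
    have h := (hweak u).sub (tendsto_const_nhds (x := ⟪u, q⟫))
    have heq : ⟪u, z - q⟫ = ⟪z, u⟫ - ⟪u, q⟫ := by
      rw [inner_sub_right, real_inner_comm]
    rw [heq]
    refine h.congr fun t => ?_
    rw [hφ]
    simp only [inner_sub_right, real_inner_comm (x t) u]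
  have hLeq : L = ⟪u, z - q⟫ := tendsto_nhds_unique hφL hfinal
  calc limsup (fun t => ⟪u, x t - q⟫) atTop = L := rfl
    _ = ⟪u, z - q⟫ := hLeq
    _ ≤ 0 := hVP z ⟨hzC, hTz⟩
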